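/- arXiv:2505.09768 — 5 statements merged into one kernel-verified Lean document; each statement's English description precedes it below -/
import Mathlib

section
/- If Cov_p[e^{r}, e^{r̃}] ≥ 0, then the adversarially reweighted update q(x) = p(x)·[(1−φ)·e^{r(x)}/E_p[e^{r}] + φ·e^{r̃(x)}/E_p[e^{r̃}]] satisfies E_q[e^{r}] ≥ E_p[e^{r}]: the expected user reward is monotone non-decreasing in one retraining step despite the adversarial component. -/
open MeasureTheory Real

/-- If `Cov_p[e^r, e^{r̃}] ≥ 0`, one step of the adversarially curated
self-consuming loop does not decrease the expected user reward: `E_q[e^r] ≥ E_p[e^r]`. -/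
theorem stmt_5 {d : ℕ} (p r rt : (Fin d → ℝ) → ℝ) (φ : ℝ)
    (hp_nonneg : ∀ x, 0 ≤ p x) (hp_meas : Measurable p)
    (hp_int : Integrable p) (hp_one : ∫ x, p x = 1)
    (hr_meas : Measurable r) (hrt_meas : Measurable rt)
    (hr_bdd : ∃ C, ∀ x, |r x| ≤ C) (hrt_bdd : ∃ C, ∀ x, |rt x| ≤ C)
    (hEr_pos : 0 < ∫ x, p x * exp (r x))
    (hErt_pos : 0 < ∫ x, p x * exp (rt x))
    (hφ : φ ∈ Set.Icc (0 : ℝ) 1)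
    (hcov : 0 ≤ (∫ x, p x * exp (r x + rt x))
        - (∫ x, p x * exp (r x)) * (∫ x, p x * exp (rt x))) :
    (∫ x, p x * exp (r x))
      ≤ ∫ x, p x * ((1 - φ) * exp (r x) / (∫ z, p z * exp (r z))
            + φ * exp (rt x) / (∫ z, p z * exp (rt z))) * exp (r x) := by
  obtain ⟨Cr, hCr⟩ := hr_bdd
  obtain ⟨Ct, hCt⟩ := hrt_bdd
  set A := ∫ x, p x * exp (r x) with hA
  set B := ∫ x, p x * exp (rt x) with hB
  have key : ∀ g : (Fin d → ℝ) → ℝ, Measurable g → (∃ C, ∀ x, ‖g x‖ ≤ C) →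
      Integrable (fun x => p x * g x) := by
    rintro g hg ⟨C, hC⟩
    simpa [mul_comm] using hp_int.bdd_mul hg.aestronglyMeasurable (Filter.Eventually.of_forall hC)
  have hbr : ∀ x, ‖exp (r x)‖ ≤ exp Cr := fun x => by
    rw [Real.norm_eq_abs, abs_of_pos (exp_pos _)]
    exact exp_le_exp.mpr (abs_le.mp (hCr x)).2
  have hbt : ∀ x, ‖exp (rt x)‖ ≤ exp Ct := fun x => by
    rw [Real.norm_eq_abs, abs_of_pos (exp_pos _)]
    exact exp_le_exp.mpr (abs_le.mp (hCt x)).2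
  have hir : Integrable (fun x => p x * exp (r x)) :=
    key _ (measurable_exp.comp hr_meas) ⟨_, hbr⟩
  have hirr : Integrable (fun x => p x * (exp (r x) * exp (r x))) :=
    key _ ((measurable_exp.comp hr_meas).mul (measurable_exp.comp hr_meas))
      ⟨exp Cr * exp Cr, fun x => by
        rw [norm_mul]
        exact mul_le_mul (hbr x) (hbr x) (norm_nonneg _) (exp_pos Cr).le⟩
  have hirt : Integrable (fun x => p x * (exp (rt x) * exp (r x))) :=
    key _ ((measurable_exp.comp hrt_meas).mul (measurable_exp.comp hr_meas))
      ⟨exp Ct * exp Cr, fun x => by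
        rw [norm_mul]
        exact mul_le_mul (hbt x) (hbr x) (norm_nonneg _) (exp_pos Ct).le⟩
  -- Cauchy–Schwarz / variance nonnegativity: A^2 ≤ ∫ p e^{2r}
  have hCS : A ^ 2 ≤ ∫ x, p x * (exp (r x) * exp (r x)) := by
    have h0 : 0 ≤ ∫ x, p x * (exp (r x) - A) ^ 2 :=
      integral_nonneg fun x => mul_nonneg (hp_nonneg x) (sq_nonneg _)
    have hexpand : (fun x => p x * (exp (r x) - A) ^ 2)
        = fun x => p x * (exp (r x) * exp (r x)) - 2 * A * (p x * exp (r x))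
            + A ^ 2 * p x := by
      funext x; ring
    have him : Integrable (fun x => 2 * A * (p x * exp (r x))) := hir.const_mul _
    have hip : Integrable (fun x => A ^ 2 * p x) := hp_int.const_mul _
    have hsub : Integrable (fun x =>
        p x * (exp (r x) * exp (r x)) - 2 * A * (p x * exp (r x))) := hirr.sub him
    rw [hexpand, integral_add hsub hip, integral_sub hirr him, integral_const_mul,
      integral_const_mul, hp_one, ← hA] at h0
    nlinarith [h0]
  -- adversarial term: A * B ≤ ∫ p e^{rt} e^{r}
  have hD : A * B ≤ ∫ x, p x * (exp (rt x) * exp (r x)) := by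
    have : (∫ x, p x * exp (r x + rt x)) = ∫ x, p x * (exp (rt x) * exp (r x)) := by
      congr 1; funext x; rw [exp_add]; ring
    linarith [hcov, this.symm.le, this.le]
  have hre : (fun x => p x * ((1 - φ) * exp (r x) / A + φ * exp (rt x) / B) * exp (r x))
      = fun x => (1 - φ) / A * (p x * (exp (r x) * exp (r x)))
          + φ / B * (p x * (exp (rt x) * exp (r x))) := by
    funext x; ring
  have hi1 : Integrable (fun x => (1 - φ) / A * (p x * (exp (r x) * exp (r x)))) :=
    hirr.const_mul _
  have hi2 : Integrable (fun x => φ / B * (p x * (exp (rt x) * exp (r x)))) :=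
    hirt.const_mul _
  rw [hre, integral_add hi1 hi2, integral_const_mul, integral_const_mul]
  have e1 : (1 - φ) * A ≤ (1 - φ) / A * ∫ x, p x * (exp (r x) * exp (r x)) := by
    rw [div_mul_eq_mul_div, le_div_iff₀ hEr_pos]
    nlinarith [hCS, hφ.2, hEr_pos]
  have e2 : φ * A ≤ φ / B * ∫ x, p x * (exp (rt x) * exp (r x)) := by
    rw [div_mul_eq_mul_div, le_div_iff₀ hErt_pos]
    nlinarith [hD, hφ.1]
  nlinarith [e1, e2]
end

section
/- For K i.i.d. samples X₁, …, X_K from density p, let X̂ be chosen among them with probability proportional to e^{r(X_k)} (Bradley–Terry selection). Then E[e^{r(X̂)}] ≥ E_p[e^{r}] + ((K−1)/K)·Var_p[e^{r}]/e^{r_max}, where r_max is an upper bound on r. -/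
open MeasureTheory Real

set_option maxHeartbeats 1000000 in
/-- For `K` i.i.d. samples from `p` and Bradley–Terry selection `X̂`
with weights proportional to `e^{r(X_k)}`,
`E[e^{r(X̂)}] ≥ E_p[e^r] + ((K−1)/K) · Var_p[e^r] / e^{r_max}`. -/
theorem stmt_6 {d : ℕ} (K : ℕ) (hK : 1 ≤ K) (p r : (Fin d → ℝ) → ℝ) (rmax : ℝ)
    (hp_nonneg : ∀ x, 0 ≤ p x) (hp_meas : Measurable p)
    (hp_int : Integrable p) (hp_one : ∫ x, p x = 1)
    (hr_meas : Measurable r)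
    (hr_ub : ∀ᵐ x, p x ≠ 0 → r x ≤ rmax)
    (hr_int : Integrable (fun x => p x * exp (r x)))
    (hr2_int : Integrable (fun x => p x * exp (2 * r x)))
    (hsel_int : Integrable (fun x : Fin K → (Fin d → ℝ) =>
      (∏ j, p (x j)) * ∑ k, exp (r (x k)) / (∑ j, exp (r (x j))) * exp (r (x k)))) :
    (∫ x, p x * exp (r x))
      + (((K : ℝ) - 1) / K)
          * ((∫ x, p x * exp (2 * r x)) - (∫ x, p x * exp (r x)) ^ 2) / exp rmax
      ≤ ∫ x : Fin K → (Fin d → ℝ),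
          (∏ j, p (x j)) * ∑ k, exp (r (x k)) / (∑ j, exp (r (x j))) * exp (r (x k)) := by
  classical
  have hKpos : (0:ℝ) < (K:ℝ) := by exact_mod_cast hK
  have hEpos : (0:ℝ) < exp rmax := exp_pos _
  set μ1 : ℝ := ∫ x, p x * exp (r x) with hμ1
  set m2 : ℝ := ∫ x, p x * exp (2 * r x) with hm2
  -- single-coordinate integrals
  have hA : ∀ (q : (Fin d → ℝ) → ℝ), Integrable (fun y => p y * q y) → ∀ k : Fin K,
      Integrable (fun x : Fin K → (Fin d → ℝ) => (∏ j, p (x j)) * q (x k)) ∧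
      (∫ x : Fin K → (Fin d → ℝ), (∏ j, p (x j)) * q (x k)) = ∫ y, p y * q y := by
    intro q hq k
    have hg : ∀ i : Fin K,
        Integrable (fun y => p y * (if i = k then q else (fun _ => (1:ℝ))) y) := by
      intro i; by_cases h : i = k <;> simp [h, hq, hp_int]
    have he : (fun x : Fin K → (Fin d → ℝ) => (∏ j, p (x j)) * q (x k))
        = fun x => ∏ i, p (x i) * (if i = k then q else (fun _ => (1:ℝ))) (x i) := by
      funext x
      rw [Finset.prod_mul_distrib]
      congr 1
      rw [Finset.prod_congr rfl (fun i _ => show _ = if i = k then q (x i) else 1 by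
        by_cases h : i = k <;> simp [h])]
      simp
    rw [he]
    refine ⟨Integrable.fintype_prod (f := fun i y => p y * _) hg, ?_⟩
    rw [integral_fintype_prod_volume_eq_prod
      (fun i y => p y * (if i = k then q else (fun _ => (1:ℝ))) y)]
    calc (∏ i : Fin K, ∫ y, p y * (if i = k then q else fun _ => (1:ℝ)) y)
        = ∏ i : Fin K, (if i = k then (∫ y, p y * q y) else 1) :=
          Finset.prod_congr rfl (fun i _ => by by_cases h : i = k <;> simp [h, hp_one])
      _ = ∫ y, p y * q y := by simp
  -- two-coordinate integrals
  have hC : ∀ j k : Fin K, j ≠ k →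
      Integrable (fun x : Fin K → (Fin d → ℝ) => (∏ i, p (x i)) * (exp (r (x j)) * exp (r (x k)))) ∧
      (∫ x : Fin K → (Fin d → ℝ), (∏ i, p (x i)) * (exp (r (x j)) * exp (r (x k)))) = μ1 * μ1 := by
    intro j k hjk
    set g : Fin K → (Fin d → ℝ) → ℝ :=
      fun i y => (if i = j then exp (r y) else 1) * (if i = k then exp (r y) else 1) with hgdef
    have hg : ∀ i : Fin K, Integrable (fun y => p y * g i y) := by
      intro i
      by_cases h1 : i = j <;> by_cases h2 : i = k
      · exact absurd (h1.symm.trans h2) hjk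
      all_goals simp [hgdef, h1, h2, hr_int, hp_int, hjk, hjk.symm]
    have he : (fun x : Fin K → (Fin d → ℝ) => (∏ i, p (x i)) * (exp (r (x j)) * exp (r (x k))))
        = fun x => ∏ i, p (x i) * g i (x i) := by
      funext x
      rw [Finset.prod_mul_distrib]
      congr 1
      rw [hgdef, Finset.prod_mul_distrib]
      congr 1 <;> simp
    rw [he]
    refine ⟨Integrable.fintype_prod (f := fun i y => p y * g i y) hg, ?_⟩
    rw [integral_fintype_prod_volume_eq_prod (fun i y => p y * g i y)]
    calc (∏ i : Fin K, ∫ y, p y * g i y)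
        = ∏ i : Fin K, ((if i = j then μ1 else 1) * (if i = k then μ1 else 1)) := by
          refine Finset.prod_congr rfl (fun i _ => ?_)
          by_cases h1 : i = j <;> by_cases h2 : i = k
          · exact absurd (h1.symm.trans h2) hjk
          all_goals simp [hgdef, h1, h2, hp_one, hjk, hjk.symm, hμ1]
      _ = μ1 * μ1 := by rw [Finset.prod_mul_distrib]; simp
  -- all pair integrals (incl. diagonal)
  have hexp2 : ∀ t : ℝ, exp t * exp t = exp (2 * t) := fun t => by rw [← exp_add, two_mul]
  have hC' : ∀ j k : Fin K,
      Integrable (fun x : Fin K → (Fin d → ℝ) => (∏ i, p (x i)) * (exp (r (x j)) * exp (r (x k)))) ∧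
      (∫ x : Fin K → (Fin d → ℝ), (∏ i, p (x i)) * (exp (r (x j)) * exp (r (x k))))
        = if j = k then m2 else μ1 * μ1 := by
    intro j k
    by_cases hjk : j = k
    · subst hjk
      have he : (fun x : Fin K → (Fin d → ℝ) => (∏ i, p (x i)) * (exp (r (x j)) * exp (r (x j))))
          = fun x => (∏ i, p (x i)) * exp (2 * r (x j)) := by
        funext x; rw [hexp2]
      rw [he, if_pos rfl]
      exact hA _ hr2_int j
    · rw [if_neg hjk]; exact hC j k hjk
  set c : ℝ := 1 / ((K:ℝ)^2 * exp rmax) with hc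
  -- the lower-bound function
  set Lo : (Fin K → (Fin d → ℝ)) → ℝ := fun x =>
    ∑ k, ((1/(K:ℝ)) * ((∏ j, p (x j)) * exp (r (x k)))
      + c * ((K:ℝ) * ((∏ j, p (x j)) * exp (2 * r (x k)))
          - ∑ j, (∏ i, p (x i)) * (exp (r (x j)) * exp (r (x k))))) with hLo
  -- integrability pieces
  have i1 : ∀ k : Fin K, Integrable (fun x : Fin K → (Fin d → ℝ) =>
      (1/(K:ℝ)) * ((∏ j, p (x j)) * exp (r (x k)))) :=
    fun k => (hA _ hr_int k).1.const_mul _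
  have i2 : ∀ k : Fin K, Integrable (fun x : Fin K → (Fin d → ℝ) =>
      (K:ℝ) * ((∏ j, p (x j)) * exp (2 * r (x k)))) :=
    fun k => (hA _ hr2_int k).1.const_mul _
  have i3 : ∀ k : Fin K, Integrable (fun x : Fin K → (Fin d → ℝ) =>
      ∑ j, (∏ i, p (x i)) * (exp (r (x j)) * exp (r (x k)))) :=
    fun k => integrable_finset_sum _ fun j _ => (hC' j k).1
  have i4 : ∀ k : Fin K, Integrable (fun x : Fin K → (Fin d → ℝ) =>
      (K:ℝ) * ((∏ j, p (x j)) * exp (2 * r (x k)))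
        - ∑ j, (∏ i, p (x i)) * (exp (r (x j)) * exp (r (x k)))) :=
    fun k => (i2 k).sub (i3 k)
  have i5 : ∀ k : Fin K, Integrable (fun x : Fin K → (Fin d → ℝ) =>
      c * ((K:ℝ) * ((∏ j, p (x j)) * exp (2 * r (x k)))
        - ∑ j, (∏ i, p (x i)) * (exp (r (x j)) * exp (r (x k))))) :=
    fun k => (i4 k).const_mul _
  have hterm_int : ∀ k : Fin K, Integrable (fun x : Fin K → (Fin d → ℝ) =>
      (1/(K:ℝ)) * ((∏ j, p (x j)) * exp (r (x k)))
      + c * ((K:ℝ) * ((∏ j, p (x j)) * exp (2 * r (x k)))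
          - ∑ j, (∏ i, p (x i)) * (exp (r (x j)) * exp (r (x k))))) :=
    fun k => (i1 k).add (i5 k)
  have hLo_int : Integrable Lo := by
    rw [hLo]; exact integrable_finset_sum _ fun k _ => hterm_int k
  have hLo_val : ∫ x, Lo x = μ1 + ((K:ℝ) - 1) / K * (m2 - μ1 ^ 2) / exp rmax := by
    simp only [hLo]
    rw [integral_finset_sum _ fun k _ => hterm_int k]
    have hterm_val : ∀ k : Fin K, (∫ x : Fin K → (Fin d → ℝ),
        ((1/(K:ℝ)) * ((∏ j, p (x j)) * exp (r (x k)))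
        + c * ((K:ℝ) * ((∏ j, p (x j)) * exp (2 * r (x k)))
            - ∑ j, (∏ i, p (x i)) * (exp (r (x j)) * exp (r (x k))))))
        = (1/(K:ℝ)) * μ1 + c * ((K:ℝ) * m2 - ((m2 - μ1 * μ1) + (K:ℝ) * (μ1 * μ1))) := by
      intro k
      rw [integral_add (i1 k) (i5 k), integral_const_mul _, integral_const_mul _,
        integral_sub (i2 k) (i3 k), integral_const_mul _,
        integral_finset_sum _ fun j _ => (hC' j k).1,
        (hA _ hr_int k).2, (hA _ hr2_int k).2, ← hμ1, ← hm2]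
      have hsum : (∑ j, ∫ x : Fin K → (Fin d → ℝ),
          (∏ i, p (x i)) * (exp (r (x j)) * exp (r (x k))))
          = (m2 - μ1 * μ1) + (K:ℝ) * (μ1 * μ1) := by
        calc (∑ j, ∫ x : Fin K → (Fin d → ℝ), (∏ i, p (x i)) * (exp (r (x j)) * exp (r (x k))))
          _ = ∑ j : Fin K, ((if j = k then m2 - μ1 * μ1 else 0) + μ1 * μ1) := by
            refine Finset.sum_congr rfl fun j _ => ?_
            rw [(hC' j k).2]
            by_cases h : j = k <;> simp [h]
          _ = (m2 - μ1 * μ1) + (K:ℝ) * (μ1 * μ1) := by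
            rw [Finset.sum_add_distrib, Finset.sum_ite_eq' Finset.univ k, Finset.sum_const,
              Finset.card_univ, Fintype.card_fin, nsmul_eq_mul]
            simp
      rw [hsum]
    rw [Finset.sum_congr rfl fun k _ => hterm_val k, Finset.sum_const, Finset.card_univ,
      Fintype.card_fin, nsmul_eq_mul, hc]
    have hKne : (K:ℝ) ≠ 0 := ne_of_gt hKpos
    have hEne : exp rmax ≠ 0 := ne_of_gt hEpos
    field_simp
    ring
  -- a.e. pointwise bound
  have hae : ∀ᵐ x : Fin K → (Fin d → ℝ), ∀ j, p (x j) ≠ 0 → r (x j) ≤ rmax := by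
    rw [ae_all_iff]
    intro j
    exact (Measure.tendsto_eval_ae_ae
      (μ := fun _ : Fin K => (volume : Measure (Fin d → ℝ))) (i := j)).eventually hr_ub
  have hmono : Lo ≤ᵐ[volume] fun x : Fin K → (Fin d → ℝ) =>
      (∏ j, p (x j)) * ∑ k, exp (r (x k)) / (∑ j, exp (r (x j))) * exp (r (x k)) := by
    filter_upwards [hae] with x hx
    by_cases hP : (∏ j, p (x j)) = 0
    · simp only [hLo, hP, zero_mul, mul_zero, Finset.sum_const_zero, sub_zero, zero_add,
        add_zero, zero_sub, neg_zero, Finset.sum_const, smul_zero]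
      simp
    · have hppos : ∀ j, 0 < p (x j) := fun j =>
        (hp_nonneg _).lt_of_ne (fun h => hP (Finset.prod_eq_zero (Finset.mem_univ j) h.symm))
      have hPpos : 0 < ∏ j, p (x j) := Finset.prod_pos fun j _ => hppos j
      have hwE : ∀ j, exp (r (x j)) ≤ exp rmax :=
        fun j => exp_le_exp.2 (hx j (ne_of_gt (hppos j)))
      have : Nonempty (Fin K) := ⟨⟨0, hK⟩⟩
      set S : ℝ := ∑ j, exp (r (x j)) with hS
      set Q : ℝ := ∑ j, exp (r (x j)) ^ 2 with hQ
      have hSpos : 0 < S := Finset.sum_pos (fun j _ => exp_pos _) Finset.univ_nonempty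
      have hQS : S ^ 2 ≤ (K:ℝ) * Q := by
        have := sq_sum_le_card_mul_sum_sq (s := (Finset.univ : Finset (Fin K)))
          (f := fun j => exp (r (x j)))
        simpa [← hS, ← hQ, Finset.card_univ] using this
      have hSE : S ≤ (K:ℝ) * exp rmax := by
        calc S ≤ ∑ _j : Fin K, exp rmax := Finset.sum_le_sum fun j _ => hwE j
          _ = (K:ℝ) * exp rmax := by
            rw [Finset.sum_const, Finset.card_univ, Fintype.card_fin, nsmul_eq_mul]
      have hLoEq : Lo x = (∏ j, p (x j)) * ((1/(K:ℝ)) * S + c * ((K:ℝ) * Q - S * S)) := by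
        simp only [hLo]
        have e1 : ∀ k : Fin K, (∑ j, (∏ i, p (x i)) * (exp (r (x j)) * exp (r (x k))))
            = (∏ i, p (x i)) * (S * exp (r (x k))) := by
          intro k
          rw [← Finset.mul_sum, ← Finset.sum_mul]
        have e2 : ∀ k : Fin K, exp (2 * r (x k)) = exp (r (x k)) ^ 2 := by
          intro k; rw [← hexp2, sq]
        calc (∑ k, ((1/(K:ℝ)) * ((∏ j, p (x j)) * exp (r (x k)))
              + c * ((K:ℝ) * ((∏ j, p (x j)) * exp (2 * r (x k)))
                  - ∑ j, (∏ i, p (x i)) * (exp (r (x j)) * exp (r (x k))))))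
            _ = ∑ k, (∏ j, p (x j)) * ((1/(K:ℝ)) * exp (r (x k))
                + c * ((K:ℝ) * exp (r (x k)) ^ 2 - S * exp (r (x k)))) := by
              refine Finset.sum_congr rfl fun k _ => ?_
              rw [e1 k, e2 k]; ring
            _ = (∏ j, p (x j)) * ∑ k, ((1/(K:ℝ)) * exp (r (x k))
                + c * ((K:ℝ) * exp (r (x k)) ^ 2 - S * exp (r (x k)))) := by
              rw [Finset.mul_sum]
            _ = (∏ j, p (x j)) * ((1/(K:ℝ)) * S + c * ((K:ℝ) * Q - S * S)) := by
              congr 1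
              rw [Finset.sum_add_distrib, ← Finset.mul_sum, ← Finset.mul_sum,
                Finset.sum_sub_distrib, ← Finset.mul_sum, ← Finset.mul_sum, ← hS, ← hQ]
      have hRhsEq : ((∏ j, p (x j)) * ∑ k, exp (r (x k)) / (∑ j, exp (r (x j))) * exp (r (x k)))
          = (∏ j, p (x j)) * (Q / S) := by
        congr 1
        rw [Finset.sum_congr rfl fun k _ =>
          show exp (r (x k)) / S * exp (r (x k)) = exp (r (x k)) ^ 2 / S by
            rw [div_mul_eq_mul_div, sq], ← Finset.sum_div, ← hQ]
      have hKne : (K:ℝ) ≠ 0 := ne_of_gt hKpos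
      have hnum : 0 ≤ (K:ℝ) * Q - S * S := by nlinarith
      have h2 : c * ((K:ℝ) * Q - S * S) ≤ ((K:ℝ) * Q - S * S) / ((K:ℝ) * S) := by
        rw [hc, one_div, inv_mul_eq_div]
        apply div_le_div_of_nonneg_left hnum (mul_pos hKpos hSpos)
        nlinarith [mul_le_mul_of_nonneg_left hSE hKpos.le]
      have h3 : (1/(K:ℝ)) * S + ((K:ℝ) * Q - S * S) / ((K:ℝ) * S) = Q / S := by
        field_simp
        ring
      have hkey : (1/(K:ℝ)) * S + c * ((K:ℝ) * Q - S * S) ≤ Q / S := by linarith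
      calc Lo x = (∏ j, p (x j)) * ((1/(K:ℝ)) * S + c * ((K:ℝ) * Q - S * S)) := hLoEq
        _ ≤ (∏ j, p (x j)) * (Q / S) := mul_le_mul_of_nonneg_left hkey hPpos.le
        _ = (∏ j, p (x j)) * ∑ k, exp (r (x k)) / (∑ j, exp (r (x j))) * exp (r (x k)) :=
            hRhsEq.symm
  calc μ1 + ((K:ℝ) - 1) / K * (m2 - μ1 ^ 2) / exp rmax = ∫ x, Lo x := hLo_val.symm
    _ ≤ _ := integral_mono_ae hLo_int hsel_int hmono
end

section
/- Define the recursion a_{t+1} = (1/(1+λ))·a_data + (λ/(1+λ))·(a_t + c_t) with a_0 = a_data, where each c_t ≥ φ·C_min for a constant C_min ≤ 0. Then for all t, a_{t+1} ≥ a_data + φ·(1+λ)·(1 − (λ/(1+λ))^{t+1})·C_min·(λ/(1+λ)), and in particular a_{t+1} ≥ a_data + φ·(1+λ)·C_min for all t. -/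
/-- For the mixed-data recursion
`a_{t+1} = (1/(1+λ))·a_data + (λ/(1+λ))·(a_t + c_t)` with `a_0 = a_data` and
`c_t ≥ φ·C_min`, `C_min ≤ 0`, we have for all `t`:
`a_{t+1} ≥ a_data + φ·(1+λ)·(1 − (λ/(1+λ))^{t+1})·C_min·(λ/(1+λ))`, and in
particular `a_{t+1} ≥ a_data + φ·(1+λ)·C_min`. -/
theorem stmt_8 (l φ Cmin adata : ℝ) (a c : ℕ → ℝ)
    (hl : 0 ≤ l) (hφ : φ ∈ Set.Icc (0 : ℝ) 1) (hC : Cmin ≤ 0)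
    (ha0 : a 0 = adata)
    (hrec : ∀ t, a (t + 1) = (1 / (1 + l)) * adata + (l / (1 + l)) * (a t + c t))
    (hc : ∀ t, φ * Cmin ≤ c t) :
    ∀ t : ℕ,
      adata + φ * (1 + l) * (1 - (l / (1 + l)) ^ (t + 1)) * Cmin * (l / (1 + l))
        ≤ a (t + 1)
      ∧ adata + φ * (1 + l) * Cmin ≤ a (t + 1) := by
  obtain ⟨hφ0, hφ1⟩ := hφ
  have hl1 : (0:ℝ) < 1 + l := by linarith
  set r : ℝ := l / (1 + l) with hr
  have hr0 : 0 ≤ r := div_nonneg hl hl1.le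
  have hr1 : r < 1 := (div_lt_one hl1).2 (by linarith)
  have hkey : (1 : ℝ) / (1 + l) = 1 - r := by rw [hr]; field_simp; ring
  have h2 : (1 + l) * (1 - r) = 1 := by rw [hr]; field_simp; ring
  have main : ∀ t : ℕ,
      adata + φ * (1 + l) * (1 - r ^ (t + 1)) * Cmin * r ≤ a (t + 1) := by
    intro t
    induction t with
    | zero =>
      have h := hrec 0
      rw [ha0] at h
      have hc0 := hc 0
      have ha1 : a 1 = adata + r * c 0 := by
        rw [h, hkey]; ring
      rw [ha1]
      have heq : adata + φ * (1 + l) * (1 - r ^ 1) * Cmin * r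
          = adata + r * (φ * Cmin) := by
        rw [pow_one]
        linear_combination (r * φ * Cmin) * h2
      rw [heq]
      exact add_le_add_right (mul_le_mul_of_nonneg_left hc0 hr0) _
    | succ t ih =>
      have h := hrec (t + 1)
      have hct := hc (t + 1)
      rw [h, hkey]
      have step : (1 - r) * adata + r * ((adata + φ * (1 + l) * (1 - r ^ (t + 1)) * Cmin * r) + φ * Cmin)
          ≤ (1 - r) * adata + r * (a (t + 1) + c (t + 1)) :=
        add_le_add_right (mul_le_mul_of_nonneg_left (add_le_add ih hct) hr0) _
      have hid : (1 - r) * adata + r * ((adata + φ * (1 + l) * (1 - r ^ (t + 1)) * Cmin * r) + φ * Cmin)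
          = adata + φ * (1 + l) * (1 - r ^ (t + 1 + 1)) * Cmin * r := by
        rw [pow_succ]
        linear_combination (-(r * φ * Cmin)) * h2
      linarith [hid ▸ step]
  intro t
  refine ⟨main t, ?_⟩
  have h1 := main t
  have hrp : 0 ≤ r ^ (t + 1) := pow_nonneg hr0 _
  have hrp1 : r ^ (t + 1) ≤ 1 := pow_le_one₀ hr0 hr1.le
  have hK : 0 ≤ φ * (1 + l) * (-Cmin) :=
    mul_nonneg (mul_nonneg hφ0 hl1.le) (neg_nonneg.2 hC)
  have h3 : 0 ≤ 1 - (1 - r ^ (t + 1)) * r := by nlinarith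
  nlinarith [mul_nonneg hK h3]
end

section
/- There exists a probability measure p on a two-point set {a, b}, reward functions r, r̃, and φ ∈ (0,1) such that the adversarially reweighted update q(x) = p(x)·[(1−φ)·e^{r(x)}/E_p[e^{r}] + φ·e^{r̃(x)}/E_p[e^{r̃}]] satisfies E_q[e^{r}] < E_p[e^{r}]: with negatively correlated adversarial rewards, the expected user reward can strictly decrease in one retraining step. -/
open Real

/-- There exist a probability measure `p` on a two-point set,
rewards `r, r̃`, and `φ ∈ (0,1)` such that the adversarially reweighted update
satisfies `E_q[e^r] < E_p[e^r]`: expected user reward can strictly decrease. -/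
theorem stmt_13 :
    ∃ (p r rt : Fin 2 → ℝ) (φ : ℝ),
      (∀ x, 0 ≤ p x) ∧ (∑ x, p x = 1) ∧ φ ∈ Set.Ioo (0 : ℝ) 1 ∧
      (∑ x, p x * ((1 - φ) * exp (r x) / (∑ z, p z * exp (r z))
            + φ * exp (rt x) / (∑ z, p z * exp (rt z))) * exp (r x))
        < ∑ x, p x * exp (r x) := by
  refine ⟨![1/2, 1/2], ![1, 0], ![0, 1], 9/10, ?_, ?_, ⟨by norm_num, by norm_num⟩, ?_⟩
  · intro x; fin_cases x <;> norm_num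
  · simp [Fin.sum_univ_two]; norm_num
  · simp only [Fin.sum_univ_two, Matrix.cons_val_zero, Matrix.cons_val_one, Matrix.head_cons,
      Real.exp_zero]
    have h1 : (2.718281 : ℝ) < Real.exp 1 := by
      have := Real.exp_one_gt_d9; linarith
    have h2 : Real.exp 1 < 2.7182819 := by
      have := Real.exp_one_lt_d9; linarith
    have hpos : (0:ℝ) < Real.exp 1 := by linarith
    have hA : (1/2 * Real.exp 1 + 1/2 * 1 : ℝ) ≠ 0 := by positivity
    have hB : (1/2 * 1 + 1/2 * Real.exp 1 : ℝ) ≠ 0 := by positivity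
    rw [div_add_div _ _ hA hB, div_add_div _ _ hA hB]
    rw [show ∀ a b c d : ℝ, a * (b/c) * d = a*b*d/c from fun a b c d => by ring,
      show ∀ a b c : ℝ, a * (b/c) * 1 = a*b*1/c from fun a b c => by ring,
      ← add_div, div_lt_iff₀ (by positivity)]
    nlinarith [sq_nonneg (Real.exp 1 - 1), sq_nonneg (Real.exp 1)]
end

section
/- For K i.i.d. samples X₁, …, X_K from p and Bradley–Terry selection X̂ with P(X̂ = X_k | X₁,…,X_K) = e^{r(X_k)}/Σ_j e^{r(X_j)}, the density of X̂ is p_{X̂}(x) = p(x)·E_{X₂,…,X_K∼p}[K·e^{r(x)}/(e^{r(x)} + Σ_{j=2}^K e^{r(X_j)})]. In particular, as K → ∞, if r is bounded then p_{X̂}(x) → p(x)·e^{r(x)}/E_p[e^{r}] pointwise for each x with p(x) > 0. -/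
open MeasureTheory Real Filter

lemma aux_abs_sub_le (a b : ℝ) : |a - b| ≤ |a| + |b| := by
  rw [sub_eq_add_neg]
  exact (abs_add_le a (-b)).trans (by rw [abs_neg])

lemma aux_integrable {d n : ℕ} {p : (Fin d → ℝ) → ℝ}
    (hp_nonneg : ∀ x, 0 ≤ p x) (hp_meas : Measurable p) (hp_int : Integrable p)
    {F : (Fin n → (Fin d → ℝ)) → ℝ} (hF : Measurable F) {C : ℝ}
    (hC : ∀ y, |F y| ≤ C) :
    Integrable (fun y : Fin n → (Fin d → ℝ) => (∏ j, p (y j)) * F y) := by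
  have h1 : Integrable (fun y : Fin n → (Fin d → ℝ) => ∏ j, p (y j)) :=
    Integrable.fintype_prod (f := fun _ => p) fun _ => hp_int
  refine (h1.const_mul C).mono' ?_ ?_
  · exact ((Finset.measurable_prod _ fun j _ =>
      hp_meas.comp (measurable_pi_apply j)).mul hF).aestronglyMeasurable
  · refine Filter.Eventually.of_forall fun y => ?_
    have h0 : 0 ≤ ∏ j, p (y j) := Finset.prod_nonneg fun j _ => hp_nonneg _
    rw [Real.norm_eq_abs, abs_mul, abs_of_nonneg h0]
    calc (∏ j, p (y j)) * |F y| ≤ (∏ j, p (y j)) * C :=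
          mul_le_mul_of_nonneg_left (hC y) h0
      _ = C * ∏ j, p (y j) := mul_comm _ _

lemma aux_prod_one {d n : ℕ} {p : (Fin d → ℝ) → ℝ} (hp_one : ∫ x, p x = 1) :
    ∫ y : Fin n → (Fin d → ℝ), ∏ j, p (y j) = 1 := by
  rw [volume_pi, integral_fintype_prod_eq_pow p, hp_one, one_pow]

lemma aux_split {d m : ℕ} {p r h : (Fin d → ℝ) → ℝ}
    (hp_nonneg : ∀ x, 0 ≤ p x) (hp_meas : Measurable p) (hp_int : Integrable p)
    (hr_meas : Measurable r) (h_meas : Measurable h) {Ch : ℝ} (hCh : ∀ x, |h x| ≤ Ch)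
    (k : Fin (m + 1)) :
    ∫ x : Fin (m + 1) → (Fin d → ℝ),
        (∏ j, p (x j)) * (exp (r (x k)) / (∑ j, exp (r (x j))) * h (x k))
      = ∫ x, (p x * ∫ y : Fin m → (Fin d → ℝ),
            (∏ j, p (y j)) * (exp (r x) / (exp (r x) + ∑ j, exp (r (y j))))) * h x := by
  have hCh0 : 0 ≤ Ch := le_trans (abs_nonneg _) (hCh 0)
  have hMP := (measurePreserving_piFinSuccAbove
    (fun _ : Fin (m + 1) => (volume : Measure (Fin d → ℝ))) k).symm
  rw [volume_pi, ← hMP.integral_comp']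
  have hins : ∀ (z : (Fin d → ℝ) × (Fin m → (Fin d → ℝ))),
      (MeasurableEquiv.piFinSuccAbove (fun _ => (Fin d → ℝ)) k).symm z
        = Fin.insertNth k z.1 z.2 := by
    intro z
    simp [MeasurableEquiv.piFinSuccAbove_symm_apply, Fin.insertNthEquiv]
  have hpt : ∀ (z : (Fin d → ℝ) × (Fin m → (Fin d → ℝ))),
      (∏ j, p ((MeasurableEquiv.piFinSuccAbove (fun _ => (Fin d → ℝ)) k).symm z j))
        * (exp (r ((MeasurableEquiv.piFinSuccAbove (fun _ => (Fin d → ℝ)) k).symm z k)) /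
            (∑ j, exp (r ((MeasurableEquiv.piFinSuccAbove (fun _ => (Fin d → ℝ)) k).symm z j)))
          * h ((MeasurableEquiv.piFinSuccAbove (fun _ => (Fin d → ℝ)) k).symm z k))
      = (p z.1 * ∏ j, p (z.2 j)) *
          (exp (r z.1) / (exp (r z.1) + ∑ j, exp (r (z.2 j))) * h z.1) := by
    have hgen : ∀ (x1 : Fin d → ℝ) (y : Fin m → (Fin d → ℝ)) (f : (Fin d → ℝ) → ℝ),
        ∏ j, f (Fin.insertNth (α := fun _ => (Fin d → ℝ)) k x1 y j) = f x1 * ∏ j, f (y j) := by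
      intro x1 y f
      rw [Fin.prod_univ_succAbove _ k]
      simp [Fin.insertNth_apply_same, Fin.insertNth_apply_succAbove]
    have hgen' : ∀ (x1 : Fin d → ℝ) (y : Fin m → (Fin d → ℝ)) (f : (Fin d → ℝ) → ℝ),
        ∑ j, f (Fin.insertNth (α := fun _ => (Fin d → ℝ)) k x1 y j) = f x1 + ∑ j, f (y j) := by
      intro x1 y f
      rw [Fin.sum_univ_succAbove _ k]
      simp [Fin.insertNth_apply_same, Fin.insertNth_apply_succAbove]
    intro z
    rw [hins z, hgen z.1 z.2 p, hgen' z.1 z.2 (fun w => exp (r w))]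
    simp [Fin.insertNth_apply_same]
  rw [integral_congr_ae (Filter.Eventually.of_forall hpt)]
  have hbase : Integrable (fun z : (Fin d → ℝ) × (Fin m → (Fin d → ℝ)) =>
      p z.1 * ∏ j, p (z.2 j)) ((volume : Measure (Fin d → ℝ)).prod (Measure.pi fun _ => volume)) := by
    have : Integrable (fun y : Fin m → (Fin d → ℝ) => ∏ j, p (y j)) :=
      Integrable.fintype_prod (f := fun _ => p) fun _ => hp_int
    rw [← volume_pi]
    exact hp_int.mul_prod this
  have hsum_pos : ∀ (x : Fin d → ℝ) (y : Fin m → (Fin d → ℝ)),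
      0 < exp (r x) + ∑ j, exp (r (y j)) := by
    intro x y
    have : (0:ℝ) ≤ ∑ j, exp (r (y j)) :=
      Finset.sum_nonneg fun j _ => (exp_pos _).le
    linarith [exp_pos (r x)]
  have hfrac : ∀ (x : Fin d → ℝ) (y : Fin m → (Fin d → ℝ)),
      0 ≤ exp (r x) / (exp (r x) + ∑ j, exp (r (y j)))
        ∧ exp (r x) / (exp (r x) + ∑ j, exp (r (y j))) ≤ 1 := by
    intro x y
    constructor
    · exact div_nonneg (exp_pos _).le (hsum_pos x y).le
    · rw [div_le_one (hsum_pos x y)]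
      have : (0:ℝ) ≤ ∑ j, exp (r (y j)) :=
        Finset.sum_nonneg fun j _ => (exp_pos _).le
      linarith
  have hG_meas : Measurable (fun z : (Fin d → ℝ) × (Fin m → (Fin d → ℝ)) =>
      exp (r z.1) / (exp (r z.1) + ∑ j, exp (r (z.2 j))) * h z.1) := by
    have h1 : Measurable fun z : (Fin d → ℝ) × (Fin m → (Fin d → ℝ)) => exp (r z.1) :=
      (measurable_exp.comp hr_meas).comp measurable_fst
    have h2 : Measurable fun z : (Fin d → ℝ) × (Fin m → (Fin d → ℝ)) =>
        ∑ j, exp (r (z.2 j)) := by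
      apply Finset.measurable_sum
      intro j _
      exact (measurable_exp.comp hr_meas).comp ((measurable_pi_apply j).comp measurable_snd)
    exact (h1.div (h1.add h2)).mul (h_meas.comp measurable_fst)
  have hint : Integrable (fun z : (Fin d → ℝ) × (Fin m → (Fin d → ℝ)) =>
      (p z.1 * ∏ j, p (z.2 j)) *
        (exp (r z.1) / (exp (r z.1) + ∑ j, exp (r (z.2 j))) * h z.1))
      ((volume : Measure (Fin d → ℝ)).prod (Measure.pi fun _ => volume)) := by
    refine (hbase.const_mul Ch).mono' ?_ ?_
    · have hpm : Measurable (fun z : (Fin d → ℝ) × (Fin m → (Fin d → ℝ)) =>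
          p z.1 * ∏ j, p (z.2 j)) :=
        (hp_meas.comp measurable_fst).mul
          (Finset.measurable_prod _ fun j _ =>
            hp_meas.comp ((measurable_pi_apply j).comp measurable_snd))
      exact (hpm.mul hG_meas).aestronglyMeasurable
    · refine Filter.Eventually.of_forall fun z => ?_
      have h0 : 0 ≤ p z.1 * ∏ j, p (z.2 j) :=
        mul_nonneg (hp_nonneg _) (Finset.prod_nonneg fun j _ => hp_nonneg _)
      rw [Real.norm_eq_abs, abs_mul, abs_of_nonneg h0, abs_mul]
      obtain ⟨hf0, hf1⟩ := hfrac z.1 z.2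
      rw [abs_of_nonneg hf0]
      calc (p z.1 * ∏ j, p (z.2 j)) *
            (exp (r z.1) / (exp (r z.1) + ∑ j, exp (r (z.2 j))) * |h z.1|)
          ≤ (p z.1 * ∏ j, p (z.2 j)) * (1 * Ch) := by
            refine mul_le_mul_of_nonneg_left ?_ h0
            exact mul_le_mul hf1 (hCh _) (abs_nonneg _) zero_le_one
        _ = Ch * (p z.1 * ∏ j, p (z.2 j)) := by ring
  rw [integral_prod _ hint]
  refine integral_congr_ae (Filter.Eventually.of_forall fun x => ?_)
  have : ∀ y : Fin m → (Fin d → ℝ),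
      (p x * ∏ j, p (y j)) * (exp (r x) / (exp (r x) + ∑ j, exp (r (y j))) * h x)
        = (p x * h x) * ((∏ j, p (y j)) * (exp (r x) / (exp (r x) + ∑ j, exp (r (y j))))) := by
    intro y; ring
  dsimp only
  rw [integral_congr_ae (Filter.Eventually.of_forall this), integral_const_mul, ← volume_pi]
  ring

set_option maxHeartbeats 1000000 in
/-- For `K` i.i.d. samples from `p` and Bradley–Terry selection `X̂`,
the density of `X̂` is `p_X̂(x) = p(x)·E_{X₂,…,X_K}[K·e^{r(x)}/(e^{r(x)} + Σ_{j≥2} e^{r(X_j)})]`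
(expressed via test functions), and as `K → ∞` (bounded `r`) it converges pointwise to
`p(x)·e^{r(x)}/E_p[e^r]` at every `x` with `p(x) > 0`. Here the `K`-sample case is
written with `K = m + 1` so the remaining samples form an `m`-tuple. -/
theorem stmt_14 {d : ℕ} (p r : (Fin d → ℝ) → ℝ)
    (hp_nonneg : ∀ x, 0 ≤ p x) (hp_meas : Measurable p)
    (hp_int : Integrable p) (hp_one : ∫ x, p x = 1)
    (hr_meas : Measurable r) (hr_bdd : ∃ C, ∀ x, |r x| ≤ C)
    (hEr_pos : 0 < ∫ z, p z * exp (r z)) :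
    (∀ m : ℕ, ∀ h : (Fin d → ℝ) → ℝ, Measurable h → (∃ C, ∀ x, |h x| ≤ C) →
      ∫ x : Fin (m + 1) → (Fin d → ℝ),
          (∏ j, p (x j)) * ∑ k, exp (r (x k)) / (∑ j, exp (r (x j))) * h (x k)
        = ∫ x, (p x * ∫ y : Fin m → (Fin d → ℝ),
              (∏ j, p (y j))
                * (((m : ℝ) + 1) * exp (r x) / (exp (r x) + ∑ j, exp (r (y j)))))
            * h x)
    ∧ (∀ x, 0 < p x →
      Tendsto (fun m : ℕ =>
          p x * ∫ y : Fin m → (Fin d → ℝ),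
            (∏ j, p (y j))
              * (((m : ℝ) + 1) * exp (r x) / (exp (r x) + ∑ j, exp (r (y j)))))
        atTop (nhds (p x * exp (r x) / ∫ z, p z * exp (r z)))) := by
  obtain ⟨C, hC⟩ := hr_bdd
  have hexp_le : ∀ z : Fin d → ℝ, exp (r z) ≤ exp C :=
    fun z => exp_le_exp.2 ((abs_le.1 (hC z)).2)
  have hexp_ge : ∀ z : Fin d → ℝ, exp (-C) ≤ exp (r z) :=
    fun z => exp_le_exp.2 ((abs_le.1 (hC z)).1)
  constructor
  · -- Part 1
    rintro m h h_meas ⟨Ch, hCh⟩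
    have hpt : ∀ x : Fin (m + 1) → (Fin d → ℝ),
        (∏ j, p (x j)) * ∑ k, exp (r (x k)) / (∑ j, exp (r (x j))) * h (x k)
          = ∑ k, (∏ j, p (x j)) * (exp (r (x k)) / (∑ j, exp (r (x j))) * h (x k)) :=
      fun x => Finset.mul_sum _ _ _
    rw [integral_congr_ae (Filter.Eventually.of_forall hpt)]
    have hterm_int : ∀ k : Fin (m + 1), Integrable (fun x : Fin (m + 1) → (Fin d → ℝ) =>
        (∏ j, p (x j)) * (exp (r (x k)) / (∑ j, exp (r (x j))) * h (x k))) := by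
      intro k
      have hsum_pos : ∀ x : Fin (m + 1) → (Fin d → ℝ), 0 < ∑ j, exp (r (x j)) := by
        intro x
        exact Finset.sum_pos (fun j _ => exp_pos _) Finset.univ_nonempty
      have hF_meas : Measurable (fun x : Fin (m + 1) → (Fin d → ℝ) =>
          exp (r (x k)) / (∑ j, exp (r (x j))) * h (x k)) := by
        have h1 : Measurable fun x : Fin (m + 1) → (Fin d → ℝ) => exp (r (x k)) :=
          (measurable_exp.comp hr_meas).comp (measurable_pi_apply k)
        have h2 : Measurable fun x : Fin (m + 1) → (Fin d → ℝ) => ∑ j, exp (r (x j)) :=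
          Finset.measurable_sum _ fun j _ =>
            (measurable_exp.comp hr_meas).comp (measurable_pi_apply j)
        exact (h1.div h2).mul (h_meas.comp (measurable_pi_apply k))
      refine aux_integrable hp_nonneg hp_meas hp_int hF_meas (C := Ch) ?_
      intro x
      have hfrac1 : exp (r (x k)) / (∑ j, exp (r (x j))) ≤ 1 := by
        rw [div_le_one (hsum_pos x)]
        exact Finset.single_le_sum (f := fun j => exp (r (x j)))
          (fun j _ => (exp_pos _).le) (Finset.mem_univ k)
      have hfrac0 : 0 ≤ exp (r (x k)) / (∑ j, exp (r (x j))) :=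
        div_nonneg (exp_pos _).le (hsum_pos x).le
      have hCh0 : 0 ≤ Ch := le_trans (abs_nonneg _) (hCh 0)
      rw [abs_mul, abs_of_nonneg hfrac0]
      calc exp (r (x k)) / (∑ j, exp (r (x j))) * |h (x k)| ≤ 1 * Ch :=
            mul_le_mul hfrac1 (hCh _) (abs_nonneg _) zero_le_one
        _ = Ch := one_mul Ch
    rw [integral_finset_sum _ fun k _ => hterm_int k]
    rw [Finset.sum_congr rfl fun k _ =>
      aux_split hp_nonneg hp_meas hp_int hr_meas h_meas hCh k]
    rw [Finset.sum_const, Finset.card_univ, Fintype.card_fin, nsmul_eq_mul]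
    have hinner : ∀ x : Fin d → ℝ,
        (∫ y : Fin m → (Fin d → ℝ), (∏ j, p (y j))
            * (((m : ℝ) + 1) * exp (r x) / (exp (r x) + ∑ j, exp (r (y j)))))
          = ((m : ℝ) + 1) * ∫ y : Fin m → (Fin d → ℝ),
              (∏ j, p (y j)) * (exp (r x) / (exp (r x) + ∑ j, exp (r (y j)))) := by
      intro x
      rw [← integral_const_mul]
      refine integral_congr_ae (Filter.Eventually.of_forall fun y => ?_)
      ring
    rw [← integral_const_mul]
    refine integral_congr_ae (Filter.Eventually.of_forall fun x => ?_)
    dsimp only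
    rw [hinner x]
    push_cast
    ring
  · -- Part 2
    intro x hpx
    have hb_pos : 0 < exp (r x) := exp_pos _
    set b := exp (r x) with hbdef
    set E := ∫ z, p z * exp (r z) with hEdef
    have hE_pos : 0 < E := hEr_pos
    have hδ : 0 < exp (-C) := exp_pos _
    have hCE : 0 < exp C + E := by linarith [exp_pos C]
    have hpg_int : Integrable (fun z : Fin d → ℝ => p z * exp (r z)) := by
      refine (hp_int.const_mul (exp C)).mono'
        ((hp_meas.mul (measurable_exp.comp hr_meas))).aestronglyMeasurable
        (Filter.Eventually.of_forall fun z => ?_)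
      rw [Real.norm_eq_abs, abs_mul, abs_of_nonneg (hp_nonneg z), abs_of_pos (exp_pos _)]
      calc p z * exp (r z) ≤ p z * exp C :=
            mul_le_mul_of_nonneg_left (hexp_le z) (hp_nonneg z)
        _ = exp C * p z := mul_comm _ _
    have h0 : ∫ z, p z * (exp (r z) - E) = 0 := by
      have heq : (fun z : Fin d → ℝ => p z * (exp (r z) - E))
          = fun z => p z * exp (r z) - E * p z := by funext z; ring
      rw [heq, integral_sub hpg_int (hp_int.const_mul E), integral_const_mul, hp_one, ← hEdef]
      ring
    have habs : ∀ z : Fin d → ℝ, |exp (r z) - E| ≤ exp C + E := by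
      intro z
      refine (aux_abs_sub_le _ _).trans ?_
      rw [abs_of_pos (exp_pos _), abs_of_pos hE_pos]
      exact add_le_add_left (hexp_le z) E
    have hsq_meas : Measurable (fun z : Fin d → ℝ =>
        p z * ((exp (r z) - E) * (exp (r z) - E))) := by
      have h1 : Measurable fun z : Fin d → ℝ => exp (r z) - E :=
        (measurable_exp.comp hr_meas).sub measurable_const
      exact hp_meas.mul (h1.mul h1)
    have hsq_int : Integrable (fun z : Fin d → ℝ =>
        p z * ((exp (r z) - E) * (exp (r z) - E))) := by
      refine (hp_int.const_mul ((exp C + E) * (exp C + E))).mono'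
        hsq_meas.aestronglyMeasurable (Filter.Eventually.of_forall fun z => ?_)
      rw [Real.norm_eq_abs, abs_mul, abs_of_nonneg (hp_nonneg z), abs_mul]
      calc p z * (|exp (r z) - E| * |exp (r z) - E|)
          ≤ p z * ((exp C + E) * (exp C + E)) := by
            refine mul_le_mul_of_nonneg_left ?_ (hp_nonneg z)
            exact mul_le_mul (habs z) (habs z) (abs_nonneg _) hCE.le
        _ = ((exp C + E) * (exp C + E)) * p z := mul_comm _ _
    set V := ∫ z, p z * ((exp (r z) - E) * (exp (r z) - E)) with hVdef
    have hV0 : 0 ≤ V :=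
      integral_nonneg fun z => mul_nonneg (hp_nonneg z) (mul_self_nonneg _)
    have hV_le : V ≤ (exp C + E) * (exp C + E) := by
      rw [hVdef]
      have hmono : ∀ z : Fin d → ℝ, p z * ((exp (r z) - E) * (exp (r z) - E))
          ≤ p z * ((exp C + E) * (exp C + E)) := by
        intro z
        refine mul_le_mul_of_nonneg_left ?_ (hp_nonneg z)
        have := abs_mul_abs_self (exp (r z) - E)
        nlinarith [habs z, abs_nonneg (exp (r z) - E)]
      calc (∫ z, p z * ((exp (r z) - E) * (exp (r z) - E)))
          ≤ ∫ z, p z * ((exp C + E) * (exp C + E)) :=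
            integral_mono hsq_int (hp_int.mul_const _) hmono
        _ = (exp C + E) * (exp C + E) := by
            rw [integral_mul_const, hp_one, one_mul]
    set K := 2 * b * (exp C + E) / (exp (-C) * E) with hKdef
    set c : ℕ → ℝ := fun m => ((m : ℝ) + 1) * b / (b + (m : ℝ) * E) with hcdef
    -- limit of c
    have hc_t : Tendsto c atTop (nhds (b / E)) := by
      have hnum : Tendsto (fun m : ℕ => b * (1 + ((m : ℝ))⁻¹)) atTop (nhds (b * (1 + 0))) :=
        tendsto_const_nhds.mul (tendsto_const_nhds.add tendsto_inv_atTop_nhds_zero_nat)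
      have hden : Tendsto (fun m : ℕ => b * ((m : ℝ))⁻¹ + E) atTop (nhds (b * 0 + E)) :=
        (tendsto_const_nhds.mul tendsto_inv_atTop_nhds_zero_nat).add tendsto_const_nhds
      have hdiv := hnum.div hden (by simpa using hE_pos.ne')
      have heq : ∀ᶠ m : ℕ in atTop,
          b * (1 + ((m : ℝ))⁻¹) / (b * ((m : ℝ))⁻¹ + E) = c m := by
        filter_upwards [eventually_ge_atTop 1] with m hm
        have hm0 : ((m : ℝ)) ≠ 0 := Nat.cast_ne_zero.2 (by omega)
        have hpos1 : 0 < b + (m : ℝ) * E := by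
          have : (0:ℝ) ≤ (m : ℝ) * E := mul_nonneg (Nat.cast_nonneg m) hE_pos.le
          linarith
        have hpos2 : 0 < b * ((m : ℝ))⁻¹ + E := by
          have : (0:ℝ) ≤ b * ((m : ℝ))⁻¹ := by positivity
          linarith
        simp only [hcdef]
        rw [div_eq_div_iff hpos2.ne' hpos1.ne']
        field_simp
      have := hdiv.congr' heq
      simpa using this
    -- the main bound
    have hbnd : ∀ᶠ m : ℕ in atTop,
        ‖(∫ y : Fin m → (Fin d → ℝ), (∏ j, p (y j))
            * (((m : ℝ) + 1) * b / (b + ∑ j, exp (r (y j))))) - c m‖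
          ≤ K / Real.sqrt m := by
      filter_upwards [eventually_ge_atTop 1] with m hm
      have hm1 : (1 : ℝ) ≤ (m : ℝ) := by exact_mod_cast hm
      have hmpos : (0 : ℝ) < (m : ℝ) := by linarith
      have hS0 : ∀ y : Fin m → (Fin d → ℝ), (0:ℝ) ≤ ∑ j, exp (r (y j)) :=
        fun y => Finset.sum_nonneg fun j _ => (exp_pos _).le
      have hS_lb : ∀ y : Fin m → (Fin d → ℝ), (m : ℝ) * exp (-C) ≤ ∑ j, exp (r (y j)) := by
        intro y
        have := Finset.sum_le_sum (s := (Finset.univ : Finset (Fin m)))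
          (f := fun _ => exp (-C)) (g := fun j => exp (r (y j))) (fun j _ => hexp_ge (y j))
        simpa [Finset.sum_const, Finset.card_univ, nsmul_eq_mul] using this
      have hS_ub : ∀ y : Fin m → (Fin d → ℝ), (∑ j, exp (r (y j))) ≤ (m : ℝ) * exp C := by
        intro y
        have := Finset.sum_le_sum (s := (Finset.univ : Finset (Fin m)))
          (f := fun j => exp (r (y j))) (g := fun _ => exp C) (fun j _ => hexp_le (y j))
        simpa [Finset.sum_const, Finset.card_univ, nsmul_eq_mul] using this
      have hS_meas : Measurable (fun y : Fin m → (Fin d → ℝ) => ∑ j, exp (r (y j))) :=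
        Finset.measurable_sum _ fun j _ =>
          (measurable_exp.comp hr_meas).comp (measurable_pi_apply j)
      have hT_bd : ∀ y : Fin m → (Fin d → ℝ),
          |(∑ j, exp (r (y j))) - (m : ℝ) * E| ≤ (m : ℝ) * exp C + (m : ℝ) * E := by
        intro y
        refine (aux_abs_sub_le _ _).trans ?_
        rw [abs_of_nonneg (hS0 y), abs_of_nonneg (mul_nonneg hmpos.le hE_pos.le)]
        exact add_le_add_left (hS_ub y) _
      have hT_meas : Measurable (fun y : Fin m → (Fin d → ℝ) =>
          (∑ j, exp (r (y j))) - (m : ℝ) * E) := hS_meas.sub measurable_const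
      have hP_int : Integrable (fun y : Fin m → (Fin d → ℝ) => ∏ j, p (y j)) :=
        Integrable.fintype_prod (f := fun _ => p) fun _ => hp_int
      have hTabs_int : Integrable (fun y : Fin m → (Fin d → ℝ) =>
          (∏ j, p (y j)) * |(∑ j, exp (r (y j))) - (m : ℝ) * E|) :=
        aux_integrable hp_nonneg hp_meas hp_int hT_meas.abs
          (C := (m : ℝ) * exp C + (m : ℝ) * E)
          (fun y => by rw [abs_abs]; exact hT_bd y)
      have hTT_int : Integrable (fun y : Fin m → (Fin d → ℝ) =>
          (∏ j, p (y j)) * (((∑ j, exp (r (y j))) - (m : ℝ) * E)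
            * ((∑ j, exp (r (y j))) - (m : ℝ) * E))) := by
        refine aux_integrable hp_nonneg hp_meas hp_int (hT_meas.mul hT_meas)
          (C := ((m : ℝ) * exp C + (m : ℝ) * E) * ((m : ℝ) * exp C + (m : ℝ) * E)) ?_
        intro y
        rw [abs_mul]
        have h1 := hT_bd y
        have h2 : (0:ℝ) ≤ (m : ℝ) * exp C + (m : ℝ) * E := by positivity
        exact mul_le_mul h1 h1 (abs_nonneg _) h2
      -- value of the diagonal/off-diagonal integrals
      have hfk_meas : ∀ i j k : Fin m, Measurable (fun z : Fin d → ℝ =>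
          p z * ((if k = i then exp (r z) - E else 1) * (if k = j then exp (r z) - E else 1))) := by
        intro i j k
        apply hp_meas.mul
        apply Measurable.mul <;> split_ifs <;>
          first
            | exact (measurable_exp.comp hr_meas).sub measurable_const
            | exact measurable_const
      have hfk_int : ∀ i j k : Fin m, Integrable (fun z : Fin d → ℝ =>
          p z * ((if k = i then exp (r z) - E else 1) * (if k = j then exp (r z) - E else 1))) := by
        intro i j k
        refine (hp_int.const_mul ((exp C + E + 1) * (exp C + E + 1))).mono'
          (hfk_meas i j k).aestronglyMeasurable (Filter.Eventually.of_forall fun z => ?_)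
        have hb1 : |if k = i then exp (r z) - E else 1| ≤ exp C + E + 1 := by
          split_ifs
          · linarith [habs z]
          · rw [abs_one]; linarith
        have hb2 : |if k = j then exp (r z) - E else 1| ≤ exp C + E + 1 := by
          split_ifs
          · linarith [habs z]
          · rw [abs_one]; linarith
        rw [Real.norm_eq_abs, abs_mul, abs_of_nonneg (hp_nonneg z), abs_mul]
        calc p z * (|if k = i then exp (r z) - E else 1| * |if k = j then exp (r z) - E else 1|)
            ≤ p z * ((exp C + E + 1) * (exp C + E + 1)) := by
              refine mul_le_mul_of_nonneg_left ?_ (hp_nonneg z)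
              exact mul_le_mul hb1 hb2 (abs_nonneg _) (by linarith)
          _ = ((exp C + E + 1) * (exp C + E + 1)) * p z := mul_comm _ _
      have hprod_eq : ∀ (i j : Fin m) (y : Fin m → (Fin d → ℝ)),
          (∏ k, p (y k)) * ((exp (r (y i)) - E) * (exp (r (y j)) - E))
            = ∏ k, (p (y k) * ((if k = i then exp (r (y k)) - E else 1)
                * (if k = j then exp (r (y k)) - E else 1))) := by
        intro i j y
        rw [Finset.prod_mul_distrib, Finset.prod_mul_distrib]
        simp [Finset.prod_ite_eq']
      have hij_int : ∀ i j : Fin m, Integrable (fun y : Fin m → (Fin d → ℝ) =>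
          (∏ k, p (y k)) * ((exp (r (y i)) - E) * (exp (r (y j)) - E))) := by
        intro i j
        have := Integrable.fintype_prod (f := fun k => fun z : Fin d → ℝ =>
          p z * ((if k = i then exp (r z) - E else 1) * (if k = j then exp (r z) - E else 1)))
          (fun k => hfk_int i j k)
        exact this.congr (Filter.Eventually.of_forall fun y => (hprod_eq i j y).symm)
      have hval : ∀ i j : Fin m, (∫ y : Fin m → (Fin d → ℝ),
          (∏ k, p (y k)) * ((exp (r (y i)) - E) * (exp (r (y j)) - E)))
            = if i = j then V else 0 := by
        intro i j
        rw [integral_congr_ae (Filter.Eventually.of_forall fun y => hprod_eq i j y)]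
        rw [volume_pi, integral_fintype_prod_eq_prod (fun k => fun z : Fin d → ℝ =>
          p z * ((if k = i then exp (r z) - E else 1) * (if k = j then exp (r z) - E else 1)))]
        by_cases hij : i = j
        · subst hij
          rw [if_pos rfl, Finset.prod_eq_single i]
          · rw [hVdef]
            simp
          · intro k _ hki
            simp only [if_neg hki, one_mul, mul_one]
            exact hp_one
          · intro hnot; exact absurd (Finset.mem_univ i) hnot
        · rw [if_neg hij]
          refine Finset.prod_eq_zero (Finset.mem_univ i) ?_
          have heqf : (fun z : Fin d → ℝ => p z * ((if i = i then exp (r z) - E else 1)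
              * (if i = j then exp (r z) - E else 1))) = fun z => p z * (exp (r z) - E) := by
            funext z
            simp [hij]
          rw [heqf]
          exact h0
      have hTsum : ∀ y : Fin m → (Fin d → ℝ),
          (∑ j, exp (r (y j))) - (m : ℝ) * E = ∑ k, (exp (r (y k)) - E) := by
        intro y
        rw [Finset.sum_sub_distrib, Finset.sum_const, Finset.card_univ, Fintype.card_fin,
          nsmul_eq_mul]
      have hQval : (∫ y : Fin m → (Fin d → ℝ),
          (∏ k, p (y k)) * (((∑ j, exp (r (y j))) - (m : ℝ) * E)
            * ((∑ j, exp (r (y j))) - (m : ℝ) * E))) = (m : ℝ) * V := by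
        have hpt2 : ∀ y : Fin m → (Fin d → ℝ),
            (∏ k, p (y k)) * (((∑ j, exp (r (y j))) - (m : ℝ) * E)
              * ((∑ j, exp (r (y j))) - (m : ℝ) * E))
            = ∑ i, ∑ j, (∏ k, p (y k)) * ((exp (r (y i)) - E) * (exp (r (y j)) - E)) := by
          intro y
          rw [hTsum y, Finset.sum_mul_sum, Finset.mul_sum]
          refine Finset.sum_congr rfl fun i _ => ?_
          rw [Finset.mul_sum]
        rw [integral_congr_ae (Filter.Eventually.of_forall hpt2)]
        rw [integral_finset_sum _ fun i _ => integrable_finset_sum _ fun j _ => hij_int i j]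
        rw [Finset.sum_congr rfl fun i (_ : i ∈ Finset.univ) =>
          integral_finset_sum _ fun j _ => hij_int i j]
        rw [Finset.sum_congr rfl fun i (_ : i ∈ Finset.univ) =>
          Finset.sum_congr rfl fun j (_ : j ∈ Finset.univ) => hval i j]
        simp [Finset.sum_ite_eq, Finset.sum_const, Finset.card_univ, nsmul_eq_mul]
      -- Cauchy-Schwarz
      set A := ∫ y : Fin m → (Fin d → ℝ),
        (∏ k, p (y k)) * |(∑ j, exp (r (y j))) - (m : ℝ) * E| with hAdef
      have hA0 : 0 ≤ A :=
        integral_nonneg fun y =>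
          mul_nonneg (Finset.prod_nonneg fun k _ => hp_nonneg _) (abs_nonneg _)
      have hCS : A * A ≤ (m : ℝ) * V := by
        have hexpand : (fun y : Fin m → (Fin d → ℝ) =>
            (∏ k, p (y k)) * ((|(∑ j, exp (r (y j))) - (m : ℝ) * E| - A)
              * (|(∑ j, exp (r (y j))) - (m : ℝ) * E| - A)))
            = fun y => ((∏ k, p (y k)) * (((∑ j, exp (r (y j))) - (m : ℝ) * E)
                * ((∑ j, exp (r (y j))) - (m : ℝ) * E))
              - (2 * A) * ((∏ k, p (y k)) * |(∑ j, exp (r (y j))) - (m : ℝ) * E|))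
              + (A * A) * (∏ k, p (y k)) := by
          funext y
          have h1 := abs_mul_abs_self ((∑ j, exp (r (y j))) - (m : ℝ) * E)
          linear_combination (∏ k, p (y k)) * h1
        have h2 : 0 ≤ ∫ y : Fin m → (Fin d → ℝ),
            (∏ k, p (y k)) * ((|(∑ j, exp (r (y j))) - (m : ℝ) * E| - A)
              * (|(∑ j, exp (r (y j))) - (m : ℝ) * E| - A)) :=
          integral_nonneg fun y =>
            mul_nonneg (Finset.prod_nonneg fun k _ => hp_nonneg _) (mul_self_nonneg _)
        rw [hexpand] at h2
        have hsub_int : Integrable (fun y : Fin m → (Fin d → ℝ) =>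
            (∏ k, p (y k)) * (((∑ j, exp (r (y j))) - (m : ℝ) * E)
              * ((∑ j, exp (r (y j))) - (m : ℝ) * E))
            - (2 * A) * ((∏ k, p (y k)) * |(∑ j, exp (r (y j))) - (m : ℝ) * E|)) :=
          hTT_int.sub (hTabs_int.const_mul (2 * A))
        rw [integral_add hsub_int (hP_int.const_mul (A * A)),
          integral_sub hTT_int (hTabs_int.const_mul (2 * A)),
          integral_const_mul, integral_const_mul, aux_prod_one hp_one, hQval, ← hAdef] at h2
        linarith
      have hA_le : A ≤ Real.sqrt m * (exp C + E) := by
        have h3 : A * A ≤ (m : ℝ) * ((exp C + E) * (exp C + E)) := by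
          have := mul_le_mul_of_nonneg_left hV_le hmpos.le
          linarith [hCS]
        calc A = Real.sqrt (A * A) := (Real.sqrt_mul_self hA0).symm
          _ ≤ Real.sqrt ((m : ℝ) * ((exp C + E) * (exp C + E))) := Real.sqrt_le_sqrt h3
          _ = Real.sqrt m * (exp C + E) := by
              rw [Real.sqrt_mul (Nat.cast_nonneg m), Real.sqrt_mul_self hCE.le]
      -- pointwise bound on the integrand difference
      have hden_pos : ∀ y : Fin m → (Fin d → ℝ), 0 < b + ∑ j, exp (r (y j)) :=
        fun y => by linarith [hb_pos, hS0 y]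
      have hden2_pos : 0 < b + (m : ℝ) * E := by
        have : (0:ℝ) ≤ (m : ℝ) * E := mul_nonneg hmpos.le hE_pos.le
        linarith
      set L := ((m : ℝ) + 1) * b / (((m : ℝ) * exp (-C)) * ((m : ℝ) * E)) with hLdef
      have hL0 : 0 ≤ L := by positivity
      have hphi : ∀ y : Fin m → (Fin d → ℝ),
          |((m : ℝ) + 1) * b / (b + ∑ j, exp (r (y j))) - c m|
            ≤ L * |(∑ j, exp (r (y j))) - (m : ℝ) * E| := by
        intro y
        have hkey : ((m : ℝ) + 1) * b / (b + ∑ j, exp (r (y j))) - c m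
            = (((m : ℝ) + 1) * b * ((m : ℝ) * E - ∑ j, exp (r (y j))))
              / ((b + ∑ j, exp (r (y j))) * (b + (m : ℝ) * E)) := by
          have hne1 : (b + ∑ j, exp (r (y j))) ≠ 0 := (hden_pos y).ne'
          have hne2 : (b + (m : ℝ) * E) ≠ 0 := hden2_pos.ne'
          simp only [hcdef]
          rw [div_sub_div _ _ hne1 hne2]
          congr 1
          ring
        rw [hkey, abs_div, abs_of_pos (mul_pos (hden_pos y) hden2_pos)]
        have hnum : |((m : ℝ) + 1) * b * ((m : ℝ) * E - ∑ j, exp (r (y j)))|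
            = ((m : ℝ) + 1) * b * |(∑ j, exp (r (y j))) - (m : ℝ) * E| := by
          rw [abs_mul, abs_of_pos (by positivity), abs_sub_comm]
        rw [hnum]
        have hd1 : ((m : ℝ) * exp (-C)) * ((m : ℝ) * E)
            ≤ (b + ∑ j, exp (r (y j))) * (b + (m : ℝ) * E) := by
          have h1 : (m : ℝ) * exp (-C) ≤ b + ∑ j, exp (r (y j)) := by
            linarith [hS_lb y, hb_pos]
          have h2 : (m : ℝ) * E ≤ b + (m : ℝ) * E := by linarith [hb_pos]
          exact mul_le_mul h1 h2 (mul_nonneg hmpos.le hE_pos.le) (hden_pos y).le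
        calc (((m : ℝ) + 1) * b * |(∑ j, exp (r (y j))) - (m : ℝ) * E|)
              / ((b + ∑ j, exp (r (y j))) * (b + (m : ℝ) * E))
            ≤ (((m : ℝ) + 1) * b * |(∑ j, exp (r (y j))) - (m : ℝ) * E|)
              / (((m : ℝ) * exp (-C)) * ((m : ℝ) * E)) :=
              div_le_div_of_nonneg_left (by positivity) (by positivity) hd1
          _ = L * |(∑ j, exp (r (y j))) - (m : ℝ) * E| := by rw [hLdef]; ring
      -- integrability of the phi integrand
      have hφ_meas : Measurable (fun y : Fin m → (Fin d → ℝ) =>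
          ((m : ℝ) + 1) * b / (b + ∑ j, exp (r (y j)))) :=
        measurable_const.div (measurable_const.add hS_meas)
      have hφ_bd : ∀ y : Fin m → (Fin d → ℝ),
          |((m : ℝ) + 1) * b / (b + ∑ j, exp (r (y j)))| ≤ (m : ℝ) + 1 := by
        intro y
        have hnn : 0 ≤ ((m : ℝ) + 1) * b / (b + ∑ j, exp (r (y j))) := by positivity
        rw [abs_of_nonneg hnn, div_le_iff₀ (hden_pos y)]
        nlinarith [hS0 y, hb_pos]
      have hpφ_int : Integrable (fun y : Fin m → (Fin d → ℝ) =>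
          (∏ j, p (y j)) * (((m : ℝ) + 1) * b / (b + ∑ j, exp (r (y j))))) :=
        aux_integrable hp_nonneg hp_meas hp_int hφ_meas (C := (m : ℝ) + 1) hφ_bd
      -- difference as an integral
      have hDm : (∫ y : Fin m → (Fin d → ℝ), (∏ j, p (y j))
            * (((m : ℝ) + 1) * b / (b + ∑ j, exp (r (y j))))) - c m
          = ∫ y : Fin m → (Fin d → ℝ), (∏ j, p (y j))
            * (((m : ℝ) + 1) * b / (b + ∑ j, exp (r (y j))) - c m) := by
        have heq2 : (fun y : Fin m → (Fin d → ℝ) => (∏ j, p (y j))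
              * (((m : ℝ) + 1) * b / (b + ∑ j, exp (r (y j))) - c m))
            = fun y => (∏ j, p (y j)) * (((m : ℝ) + 1) * b / (b + ∑ j, exp (r (y j))))
              - (c m) * (∏ j, p (y j)) := by
          funext y; ring
        rw [heq2, integral_sub hpφ_int (hP_int.const_mul _), integral_const_mul,
          aux_prod_one hp_one, mul_one]
      have hdiff_meas : Measurable (fun y : Fin m → (Fin d → ℝ) =>
          ((m : ℝ) + 1) * b / (b + ∑ j, exp (r (y j))) - c m) :=
        hφ_meas.sub measurable_const
      have hdiff_bd : ∀ y : Fin m → (Fin d → ℝ),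
          |((m : ℝ) + 1) * b / (b + ∑ j, exp (r (y j))) - c m| ≤ (m : ℝ) + 1 + |c m| := by
        intro y
        refine (aux_abs_sub_le _ _).trans ?_
        exact add_le_add_left (hφ_bd y) _
      have hdiff_int : Integrable (fun y : Fin m → (Fin d → ℝ) =>
          (∏ j, p (y j)) * (((m : ℝ) + 1) * b / (b + ∑ j, exp (r (y j))) - c m)) :=
        aux_integrable hp_nonneg hp_meas hp_int hdiff_meas (C := (m : ℝ) + 1 + |c m|) hdiff_bd
      -- put it together
      rw [hDm, Real.norm_eq_abs]
      have step1 : |∫ y : Fin m → (Fin d → ℝ), (∏ j, p (y j))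
            * (((m : ℝ) + 1) * b / (b + ∑ j, exp (r (y j))) - c m)|
          ≤ ∫ y : Fin m → (Fin d → ℝ), (∏ j, p (y j))
            * (L * |(∑ j, exp (r (y j))) - (m : ℝ) * E|) := by
        refine (norm_integral_le_integral_norm
          (f := fun y : Fin m → (Fin d → ℝ) => (∏ j, p (y j))
            * (((m : ℝ) + 1) * b / (b + ∑ j, exp (r (y j))) - c m))).trans ?_
        refine integral_mono ?_ ?_ ?_
        · exact hdiff_int.abs
        · exact (hTabs_int.const_mul L).congr
            (Filter.Eventually.of_forall fun y => by ring)
        · intro y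
          dsimp only
          rw [Real.norm_eq_abs, abs_mul,
            abs_of_nonneg (Finset.prod_nonneg fun k _ => hp_nonneg _)]
          exact mul_le_mul_of_nonneg_left (hphi y)
            (Finset.prod_nonneg fun k _ => hp_nonneg _)
      have step2 : (∫ y : Fin m → (Fin d → ℝ), (∏ j, p (y j))
            * (L * |(∑ j, exp (r (y j))) - (m : ℝ) * E|)) = L * A := by
        have heq3 : (fun y : Fin m → (Fin d → ℝ) => (∏ j, p (y j))
              * (L * |(∑ j, exp (r (y j))) - (m : ℝ) * E|))
            = fun y => L * ((∏ j, p (y j)) * |(∑ j, exp (r (y j))) - (m : ℝ) * E|) := by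
          funext y; ring
        rw [heq3, integral_const_mul, ← hAdef]
      have step3 : L * A ≤ L * (Real.sqrt m * (exp C + E)) :=
        mul_le_mul_of_nonneg_left hA_le hL0
      have hs_pos : 0 < Real.sqrt m := Real.sqrt_pos.2 hmpos
      have hss : Real.sqrt m * Real.sqrt m = (m : ℝ) := Real.mul_self_sqrt hmpos.le
      have step4 : L * (Real.sqrt m * (exp C + E)) ≤ K / Real.sqrt m := by
        rw [hLdef, hKdef]
        rw [div_mul_eq_mul_div, div_le_div_iff₀ (by positivity) hs_pos]
        rw [div_mul_eq_mul_div, le_div_iff₀ (by positivity)]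
        calc ((m : ℝ) + 1) * b * (Real.sqrt m * (exp C + E)) * Real.sqrt m * (exp (-C) * E)
            = (((m : ℝ) + 1) * (Real.sqrt m * Real.sqrt m)) * (b * (exp C + E) * (exp (-C) * E)) := by
              ring
          _ = (((m : ℝ) + 1) * (m : ℝ)) * (b * (exp C + E) * (exp (-C) * E)) := by rw [hss]
          _ ≤ (2 * ((m : ℝ) * (m : ℝ))) * (b * (exp C + E) * (exp (-C) * E)) := by
              refine mul_le_mul_of_nonneg_right (by nlinarith) ?_
              exact mul_nonneg (mul_nonneg hb_pos.le hCE.le) (mul_nonneg hδ.le hE_pos.le)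
          _ = 2 * b * (exp C + E) * ((m : ℝ) * exp (-C) * ((m : ℝ) * E)) := by ring
      calc |∫ y : Fin m → (Fin d → ℝ), (∏ j, p (y j))
            * (((m : ℝ) + 1) * b / (b + ∑ j, exp (r (y j))) - c m)|
          ≤ L * A := step1.trans_eq step2
        _ ≤ L * (Real.sqrt m * (exp C + E)) := step3
        _ ≤ K / Real.sqrt m := step4
    -- conclude
    have hKt : Tendsto (fun m : ℕ => K / Real.sqrt m) atTop (nhds 0) := by
      have h1 : Tendsto (fun m : ℕ => Real.sqrt m) atTop atTop := by
        have := (tendsto_rpow_atTop (y := (1:ℝ)/2) (by norm_num)).comp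
          tendsto_natCast_atTop_atTop
        refine this.congr fun m => ?_
        rw [Function.comp_apply, ← Real.sqrt_eq_rpow]
      have h2 := h1.inv_tendsto_atTop
      have h3 := h2.const_mul K
      simpa [div_eq_mul_inv] using h3
    have hD_t : Tendsto (fun m : ℕ =>
        (∫ y : Fin m → (Fin d → ℝ), (∏ j, p (y j))
          * (((m : ℝ) + 1) * b / (b + ∑ j, exp (r (y j))))) - c m) atTop (nhds 0) :=
      squeeze_zero_norm' hbnd hKt
    have hJt : Tendsto (fun m : ℕ =>
        ∫ y : Fin m → (Fin d → ℝ), (∏ j, p (y j))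
          * (((m : ℝ) + 1) * b / (b + ∑ j, exp (r (y j))))) atTop (nhds (b / E)) := by
      have := hc_t.add hD_t
      rw [add_zero] at this
      refine this.congr fun m => ?_
      ring
    have hconc := hJt.const_mul (p x)
    rw [mul_div_assoc]
    exact hconc
end
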